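/- Let H : ℝⁿ ⇉ ℝⁿ be outer semicontinuous and locally bounded with H(x) nonempty and convex for all x ∈ ℝⁿ (i.e., the inclusion ẋ ∈ H(x) on ℝⁿ is well-posed). Then for every T > 0, every ε > 0, and every x₀ ∈ ℝⁿ there exists a (T, ε)-truncated solution of ẋ ∈ H(x) with x(0) = x₀. -/

import Mathlib

open Metric Set Filter Topology MeasureTheory Pointwise
open scoped RealInnerProductSpace

noncomputable section

/-- Euclidean space `ℝⁿ`. -/
abbrev Euc (n : ℕ) := EuclideanSpace ℝ (Fin n)

/-- Continuous linear operators on `ℝⁿ` (playing the role of `n × n` matrices). -/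
abbrev EucOp (n : ℕ) := Euc n →L[ℝ] Euc n

variable {n : ℕ}

/-- The set of nearest points of `C` to `x` (the Euclidean projection `P_C(x)`). -/
def projSet (C : Set (Euc n)) (x : Euc n) : Set (Euc n) :=
  {c | c ∈ C ∧ dist x c = Metric.infDist x C}

/-- The (Bouligand) tangent cone to `C` at `x`, via sequences:
`v = lim (xk - x)/δk` with `xk ∈ C`, `xk → x`, `δk → 0⁺`. -/
def tanCone (C : Set (Euc n)) (x : Euc n) : Set (Euc n) :=
  {v | ∃ (xk : ℕ → Euc n) (δk : ℕ → ℝ),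
    (∀ k, xk k ∈ C) ∧ Filter.Tendsto xk Filter.atTop (nhds x) ∧
    (∀ k, 0 < δk k) ∧ Filter.Tendsto δk Filter.atTop (nhds 0) ∧
    Filter.Tendsto (fun k => (δk k)⁻¹ • (xk k - x)) Filter.atTop (nhds v)}

/-- Clarke regularity: sequential inner semicontinuity of the tangent-cone map on `C`. -/
def ClarkeRegular (C : Set (Euc n)) : Prop :=
  ∀ x ∈ C, ∀ v ∈ tanCone C x, ∀ xk : ℕ → Euc n,
    (∀ k, xk k ∈ C) → Filter.Tendsto xk Filter.atTop (nhds x) →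
    ∃ vk : ℕ → Euc n, (∀ k, vk k ∈ tanCone C (xk k)) ∧
      Filter.Tendsto vk Filter.atTop (nhds v)

/-- The Euclidean normal cone `N_xC`, the polar of the tangent cone. -/
def normalCone (C : Set (Euc n)) (x : Euc n) : Set (Euc n) :=
  {η | ∀ v ∈ tanCone C x, ⟪η, v⟫ ≤ 0}

/-- `C` is `α`-prox-regular at `x`: every normal vector at `x` is `α`-proximal. -/
def ProxRegularAt (C : Set (Euc n)) (α : ℝ) (x : Euc n) : Prop :=
  ∀ η ∈ normalCone C x, ∀ y ∈ C, ⟪η, y - x⟫ ≤ α * ‖η‖ * ‖y - x‖ ^ 2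

/-- `C` is `α`-prox-regular: Clarke regular and `α`-prox-regular at every point. -/
def ProxRegular (C : Set (Euc n)) (α : ℝ) : Prop :=
  ClarkeRegular C ∧ ∀ x ∈ C, ProxRegularAt C α x

/-- `G` is a (continuous) metric on `C`: continuous, symmetric, positive definite. -/
def IsMetricOn (C : Set (Euc n)) (G : Euc n → EucOp n) : Prop :=
  ContinuousOn G C ∧
    ∀ x ∈ C, (∀ u v : Euc n, ⟪G x u, v⟫ = ⟪u, G x v⟫) ∧
      ∀ u : Euc n, u ≠ 0 → 0 < ⟪u, G x u⟫

/-- The inner product `⟨u, v⟩_{G(x)} := uᵀ G(x) v` induced by an operator `Gx`. -/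
def innerG (Gx : EucOp n) (u v : Euc n) : ℝ := ⟪u, Gx v⟫

/-- The norm `‖u‖_{G(x)}` induced by an operator `Gx`. -/
def normG (Gx : EucOp n) (u : Euc n) : ℝ := Real.sqrt (innerG Gx u u)

/-- The `G`-normal cone `N^G_xC`. -/
def normalConeG (C : Set (Euc n)) (G : Euc n → EucOp n) (x : Euc n) : Set (Euc n) :=
  {η | ∀ v ∈ tanCone C x, innerG (G x) η v ≤ 0}

/-- The projection `Π^G_C[w](x)`: minimizers of `‖v - w‖_{G(x)}` over the tangent cone. -/
def projTanG (C : Set (Euc n)) (G : Euc n → EucOp n) (w x : Euc n) : Set (Euc n) :=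
  {v | v ∈ tanCone C x ∧ ∀ u ∈ tanCone C x, normG (G x) (v - w) ≤ normG (G x) (u - w)}

/-- The Euclidean projection onto the tangent cone, `Π_C[w](x)` (identity metric). -/
def projTanI (C : Set (Euc n)) (w x : Euc n) : Set (Euc n) :=
  {v | v ∈ tanCone C x ∧ ∀ u ∈ tanCone C x, ‖v - w‖ ≤ ‖u - w‖}

/-- `z` is a Carathéodory solution of `ż ∈ H(z)`, `z ∈ C`, on `[0,T]`, with (a.e.)
derivative `v`: absolute continuity is encoded by the integral representation. -/
def SolutionVia (H : Euc n → Set (Euc n)) (C : Set (Euc n)) (T : ℝ)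
    (z v : ℝ → Euc n) : Prop :=
  (∀ t ∈ Set.Icc (0:ℝ) T, z t ∈ C) ∧
  MeasureTheory.IntegrableOn v (Set.Icc (0:ℝ) T) ∧
  (∀ᵐ t ∂(MeasureTheory.volume.restrict (Set.Icc (0:ℝ) T)), v t ∈ H (z t)) ∧
  (∀ t ∈ Set.Icc (0:ℝ) T, z t = z 0 + ∫ s in (0:ℝ)..t, v s)

/-- `z` is a Carathéodory solution of `ż ∈ H(z)`, `z ∈ C`, on `[0,T]`. -/
def IsSolutionOn (H : Euc n → Set (Euc n)) (C : Set (Euc n)) (T : ℝ)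
    (z : ℝ → Euc n) : Prop :=
  ∃ v : ℝ → Euc n, SolutionVia H C T z v

/-- `z : [0,T'] → ℝⁿ` is a `(T, ε)`-truncated solution of `ż ∈ H(z)`, `z ∈ C`,
with initial condition `z₀`. -/
def IsTruncSol (H : Euc n → Set (Euc n)) (C : Set (Euc n)) (T ε : ℝ) (z₀ : Euc n)
    (T' : ℝ) (z : ℝ → Euc n) : Prop :=
  0 ≤ T' ∧ T' ≤ T ∧ IsSolutionOn H C T' z ∧ z 0 = z₀ ∧
  (∀ t ∈ Set.Icc (0:ℝ) T', ‖z t - z₀‖ ≤ ε) ∧ (T' = T ∨ ‖z T' - z₀‖ = ε)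

/-- A complete solution: a solution on every compact interval `[0,T]`. -/
def IsCompleteSol (H : Euc n → Set (Euc n)) (C : Set (Euc n)) (z : ℝ → Euc n) : Prop :=
  ∀ T : ℝ, 0 ≤ T → IsSolutionOn H C T z

/-- The graph of a map defined on `[0,T']`, as a subset of `ℝ × ℝⁿ`. -/
def graphOn (T' : ℝ) (z : ℝ → Euc n) : Set (ℝ × Euc n) :=
  {p | p.1 ∈ Set.Icc (0:ℝ) T' ∧ p.2 = z p.1}

/-- Painlevé–Kuratowski convergence of a sequence of sets to `L`:
`L` is contained in the inner limit and contains the outer limit. -/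
def KuratowskiTendsto {X : Type*} [TopologicalSpace X] (A : ℕ → Set X) (L : Set X) : Prop :=
  (∀ x ∈ L, ∀ U ∈ nhds x, ∀ᶠ i in Filter.atTop, (A i ∩ U).Nonempty) ∧
  (∀ x : X, (∀ U ∈ nhds x, ∃ᶠ i in Filter.atTop, (A i ∩ U).Nonempty) → x ∈ L)

/-- The enlarged set `Z°_α := Z + (1/(2α))·int 𝔹` on which the projection is single-valued. -/
def ZballSet (Z : Set (Euc n)) (α : ℝ) : Set (Euc n) :=
  Z + Metric.ball (0 : Euc n) (1 / (2 * α))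

/-- The anti-windup approximation vector field
`F_K(z) = f(z, P_Z(z)) − (1/K)·G⁻¹(P_Z(z))(z − P_Z(z))`, as a set-valued map. -/
def AWA (f : Euc n → Euc n → Euc n) (Ginv : Euc n → EucOp n) (Z : Set (Euc n)) (K : ℝ)
    (z : Euc n) : Set (Euc n) :=
  (fun zb => f z zb - K⁻¹ • Ginv zb (z - zb)) '' projSet Z z

/-- The special anti-windup vector field `F_K(z) = f(P_Z(z)) − (1/K)·G⁻¹(P_Z(z))(z − P_Z(z))`. -/
def AWAspec (f : Euc n → Euc n) (Ginv : Euc n → EucOp n) (Z : Set (Euc n)) (K : ℝ)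
    (z : Euc n) : Set (Euc n) :=
  (fun zb => f zb - K⁻¹ • Ginv zb (z - zb)) '' projSet Z z

/-- `Ginv` is a pointwise (two-sided) inverse of `G` on `Z`. -/
def InverseOn (G Ginv : Euc n → EucOp n) (Z : Set (Euc n)) : Prop :=
  ∀ x ∈ Z, (∀ u : Euc n, G x (Ginv x u) = u) ∧ (∀ u : Euc n, Ginv x (G x u) = u)

/-- A function of class `K∞` on `[0,∞)`. -/
def ClassKInf (ω : ℝ → ℝ) : Prop :=
  ContinuousOn ω (Set.Ici (0:ℝ)) ∧ StrictMonoOn ω (Set.Ici (0:ℝ)) ∧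
  (∀ M : ℝ, ∃ r : ℝ, 0 ≤ r ∧ M ≤ ω r) ∧ ω 0 = 0 ∧ ∀ r : ℝ, 0 ≤ r → 0 ≤ ω r

/-- A function of class `KL` on `[0,∞)²`. -/
def ClassKL (β : ℝ → ℝ → ℝ) : Prop :=
  (∀ r s : ℝ, 0 ≤ r → 0 ≤ s → 0 ≤ β r s) ∧
  (∀ s : ℝ, 0 ≤ s → MonotoneOn (fun r => β r s) (Set.Ici (0:ℝ))) ∧
  (∀ r : ℝ, 0 ≤ r → AntitoneOn (β r) (Set.Ici (0:ℝ))) ∧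
  (∀ s : ℝ, 0 ≤ s → Filter.Tendsto (fun r => β r s) (nhdsWithin 0 (Set.Ioi 0)) (nhds 0)) ∧
  (∀ r : ℝ, 0 ≤ r → Filter.Tendsto (β r) Filter.atTop (nhds 0))

/-- The local assumption (Assumption 3.3) at `z₀ ∈ Z` with constants `M, ν, μ, α, ε`. -/
def LocalAssumption (Z : Set (Euc n)) (f : Euc n → Euc n → Euc n) (Ginv : Euc n → EucOp n)
    (z₀ : Euc n) (M ν μ α ε : ℝ) : Prop :=
  (0 < M ∧ 0 < ν ∧ 0 < μ ∧ 0 < α ∧ 0 < ε) ∧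
  (∀ z ∈ Metric.closedBall z₀ ε ∩ ZballSet Z α, ∀ zb ∈ projSet Z z, ‖f z zb‖ ≤ M) ∧
  (∀ z ∈ Metric.closedBall z₀ ε ∩ ZballSet Z α, ∀ zb ∈ projSet Z z, ∀ u : Euc n,
    μ * ‖u‖ ^ 2 ≤ ⟪u, Ginv zb u⟫ ∧ ⟪u, Ginv zb u⟫ ≤ ν * ‖u‖ ^ 2) ∧
  (∀ x ∈ Metric.closedBall z₀ ε ∩ Z, ProxRegularAt Z α x)

/-- The alternate-form vector field `F̂(z) = f(z, P_Z(z)) − N^G_zZ ∩ γ𝔹` (for `z ∈ Z`). -/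
def FhatMap (f : Euc n → Euc n → Euc n) (G : Euc n → EucOp n) (Z : Set (Euc n)) (γ : ℝ)
    (z : Euc n) : Set (Euc n) :=
  (fun η => f z z - η) '' {η | η ∈ normalConeG Z G z ∧ ‖η‖ ≤ γ}

/-- The `σ`-perturbation `H_σ(x) := cl co H((x + σ𝔹) ∩ C) + σ𝔹` of a set-valued map. -/
def perturbMap (H : Euc n → Set (Euc n)) (C : Set (Euc n)) (σ : ℝ) (x : Euc n) :
    Set (Euc n) :=
  closure (convexHull ℝ (⋃ y ∈ Metric.closedBall x σ ∩ C, H y)) +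
    Metric.closedBall (0 : Euc n) σ

end


open scoped NNReal BoundedContinuousFunction
set_option synthInstance.maxHeartbeats 1000000
set_option maxHeartbeats 1000000

noncomputable section AuxProofs
variable {n : ℕ}


/-- Bound for a locally bounded set-valued map on a compact set. -/
lemma bound_on_compact (H : Euc n → Set (Euc n))
    (hlb : ∀ x : Euc n, ∃ U ∈ nhds x, Bornology.IsBounded (⋃ y ∈ U, H y))
    {K : Set (Euc n)} (hK : IsCompact K) :
    ∃ M : ℝ, ∀ y ∈ K, ∀ v ∈ H y, ‖v‖ ≤ M := by
  choose U hU hUb using hlb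
  obtain ⟨t, ht⟩ := hK.elim_nhds_subcover U (fun x _ => hU x)
  have hb : Bornology.IsBounded (⋃ x ∈ t, ⋃ y ∈ U x, H y) :=
    (Bornology.isBounded_biUnion_finset t).2 (fun x _ => hUb x)
  obtain ⟨M, hM⟩ := hb.subset_closedBall 0
  refine ⟨M, fun y hy v hv => ?_⟩
  obtain ⟨x, hxt, hyx⟩ := Set.mem_iUnion₂.1 (ht.2 hy)
  have : v ∈ ⋃ x ∈ t, ⋃ y ∈ U x, H y :=
    Set.mem_iUnion₂.2 ⟨x, hxt, Set.mem_iUnion₂.2 ⟨y, hyx, hv⟩⟩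
  simpa [Metric.mem_closedBall, dist_eq_norm] using hM this

/-- Radial retraction onto the closed ball. -/
def ret (x₀ : Euc n) (ε : ℝ) (x : Euc n) : Euc n :=
  x₀ + (ε / max ε ‖x - x₀‖) • (x - x₀)

lemma ret_continuous (x₀ : Euc n) {ε : ℝ} (hε : 0 < ε) : Continuous (ret x₀ ε) := by
  have h1 : Continuous fun x : Euc n => max ε ‖x - x₀‖ :=
    continuous_const.max ((continuous_id.sub continuous_const).norm)
  have h2 : ∀ x : Euc n, max ε ‖x - x₀‖ ≠ 0 := fun x =>
    ne_of_gt (lt_max_of_lt_left hε)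
  exact continuous_const.add
    (((continuous_const.div h1 h2)).smul (continuous_id.sub continuous_const))

lemma ret_mem (x₀ : Euc n) {ε : ℝ} (hε : 0 < ε) (x : Euc n) :
    ret x₀ ε x ∈ closedBall x₀ ε := by
  have hmax : 0 < max ε ‖x - x₀‖ := lt_max_of_lt_left hε
  have : ‖ret x₀ ε x - x₀‖ = (ε / max ε ‖x - x₀‖) * ‖x - x₀‖ := by
    simp only [ret, add_sub_cancel_left, norm_smul, Real.norm_eq_abs]
    rw [abs_of_nonneg (div_nonneg hε.le hmax.le)]
  rw [Metric.mem_closedBall, dist_eq_norm, this]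
  rw [div_mul_eq_mul_div, div_le_iff₀ hmax]
  have : ‖x - x₀‖ ≤ max ε ‖x - x₀‖ := le_max_right _ _
  nlinarith [hε.le, norm_nonneg (x - x₀)]

lemma ret_eq (x₀ : Euc n) {ε : ℝ} (hε : 0 < ε) {x : Euc n}
    (hx : x ∈ closedBall x₀ ε) : ret x₀ ε x = x := by
  rw [Metric.mem_closedBall, dist_eq_norm] at hx
  have : max ε ‖x - x₀‖ = ε := max_eq_left hx
  simp [ret, this, div_self hε.ne']

/-- The half-space lemma: if `w ∉ H x` with `H` osc, bounded, convex-closed valued, then some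
half-space separates `w` from all values of `H` near `x`. -/
lemma osc_halfspace (H : Euc n → Set (Euc n))
    (hosc : IsClosed {p : Euc n × Euc n | p.2 ∈ H p.1})
    {M : ℝ} (hb : ∀ x : Euc n, ∀ v ∈ H x, ‖v‖ ≤ M)
    (x w : Euc n) (hconv : Convex ℝ (H x)) (hw : w ∉ H x) :
    ∃ (ℓ : Euc n →L[ℝ] ℝ) (c : ℝ) (δ : ℝ), 0 < δ ∧ c < ℓ w ∧
      ∀ y : Euc n, dist y x ≤ δ → ∀ v ∈ H y, ℓ v ≤ c := by
  have hclosed : IsClosed (H x) := by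
    have : H x = (fun v : Euc n => (x, v)) ⁻¹' {p : Euc n × Euc n | p.2 ∈ H p.1} := rfl
    rw [this]
    exact hosc.preimage (Continuous.prodMk continuous_const continuous_id)
  obtain ⟨ℓ, c, hc1, hc2⟩ := geometric_hahn_banach_closed_point hconv hclosed hw
  refine ⟨ℓ, c, ?_⟩
  by_contra hcon
  push_neg at hcon
  have key : ∀ m : ℕ, ∃ y v, dist y x ≤ 1 / (m + 1) ∧ v ∈ H y ∧ c < ℓ v := by
    intro m
    obtain ⟨y, hyx, v, hv, hlv⟩ := hcon (1 / (m + 1)) (by positivity) hc2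
    exact ⟨y, v, hyx, hv, hlv⟩
  choose y v hyx hv hlv using key
  have hvb : ∀ m, v m ∈ closedBall (0 : Euc n) M := fun m => by
    simpa [Metric.mem_closedBall, dist_eq_norm] using hb (y m) (v m) (hv m)
  obtain ⟨vb, _, φ, hφ, hvφ⟩ :=
    (isCompact_closedBall (0 : Euc n) M).tendsto_subseq hvb
  have hyx' : Tendsto y atTop (nhds x) := by
    rw [tendsto_iff_dist_tendsto_zero]
    refine squeeze_zero (fun m => dist_nonneg) hyx ?_
    exact tendsto_one_div_add_atTop_nhds_zero_nat
  have hmem : vb ∈ H x := by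
    have : Tendsto (fun m => (y (φ m), v (φ m))) atTop (nhds (x, vb)) :=
      (hyx'.comp hφ.tendsto_atTop).prodMk_nhds hvφ
    have := hosc.mem_of_tendsto this (Eventually.of_forall fun m => hv (φ m))
    exact this
  have h1 : ℓ vb < c := hc1 vb hmem
  have h2 : c ≤ ℓ vb := by
    have : Tendsto (fun m => ℓ (v (φ m))) atTop (nhds (ℓ vb)) :=
      (ℓ.continuous.tendsto _).comp hvφ
    exact le_of_tendsto_of_tendsto' tendsto_const_nhds this fun m => (hlv (φ m)).le
  exact absurd h1 (not_lt.2 h2)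

/-- difference quotients along 1/(m+1) converge to the derivative. -/
lemma slope_tendsto {F : ℝ → Euc n} {x : ℝ} {d : Euc n} (h : HasDerivAt F d x) :
    Tendsto (fun m : ℕ => ((m : ℝ) + 1) • (F (x + ((m : ℝ) + 1)⁻¹) - F x)) atTop (nhds d) := by
  have hs := hasDerivAt_iff_tendsto_slope.1 h
  have hy : Tendsto (fun m : ℕ => x + ((m : ℝ) + 1)⁻¹) atTop (nhdsWithin x {x}ᶜ) := by
    apply tendsto_nhdsWithin_of_tendsto_nhds_of_eventually_within
    · have : Tendsto (fun m : ℕ => ((m : ℝ) + 1)⁻¹) atTop (nhds 0) := by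
        simpa using tendsto_one_div_add_atTop_nhds_zero_nat (𝕜 := ℝ)
      simpa using tendsto_const_nhds.add this
    · filter_upwards with m
      have : (0:ℝ) < ((m : ℝ) + 1)⁻¹ := by positivity
      simp only [Set.mem_compl_iff, Set.mem_singleton_iff]
      intro hE
      nlinarith [congrArg (fun r => r - x) hE]
  have := hs.comp hy
  convert this using 2 with m
  simp only [Function.comp_apply, slope_def_module]
  rw [add_sub_cancel_left]
  rw [inv_inv]

/-- FTC for Lipschitz functions: `F x = F 0 + ∫₀ˣ F'`. -/
lemma lipschitz_ftc {F : ℝ → Euc n} {L : ℝ≥0} (hF : LipschitzWith L F) {x : ℝ} (hx : 0 ≤ x) :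
    F x = F 0 + ∫ t in (0:ℝ)..x, deriv F t := by
  have hFc : Continuous F := hF.continuous
  have hdiff : ∀ᵐ t ∂(volume : Measure ℝ), DifferentiableAt ℝ F t := hF.ae_differentiableAt
  set c : ℕ → ℝ := fun m => ((m : ℝ) + 1)⁻¹ with hc
  have hcpos : ∀ m, 0 < c m := fun m => by positivity
  set g : ℕ → ℝ → Euc n := fun m t => ((m : ℝ) + 1) • (F (t + c m) - F t) with hgdef
  -- the primitive of F
  set G : ℝ → Euc n := fun y => ∫ t in (0:ℝ)..y, F t with hG
  have hGderiv : ∀ y : ℝ, HasDerivAt G (F y) y := fun y =>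
    intervalIntegral.integral_hasDerivAt_right (hFc.intervalIntegrable _ _)
      (hFc.stronglyMeasurable.stronglyMeasurableAtFilter) hFc.continuousAt
  -- finite measure instance
  have hfin : IsFiniteMeasure (volume.restrict (Ioc (0:ℝ) x)) := by
    constructor
    rw [Measure.restrict_apply_univ, Real.volume_Ioc]
    exact ENNReal.ofReal_lt_top
  -- dominated convergence
  have hDCT : Tendsto (fun m => ∫ t in Ioc (0:ℝ) x, g m t) atTop
      (nhds (∫ t in Ioc (0:ℝ) x, deriv F t)) := by
    apply MeasureTheory.tendsto_integral_of_dominated_convergence (fun _ => (L : ℝ))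
    · intro m
      exact ((hFc.comp (continuous_id.add continuous_const)).sub hFc).const_smul ((m:ℝ)+1)
        |>.aestronglyMeasurable
    · exact integrable_const _
    · intro m
      filter_upwards with t
      have := hF.norm_sub_le (t + c m) t
      have h1 : ‖g m t‖ = ((m:ℝ)+1) * ‖F (t + c m) - F t‖ := by
        simp only [hgdef, norm_smul, Real.norm_eq_abs]
        rw [abs_of_nonneg (by positivity : (0:ℝ) ≤ (m:ℝ)+1)]
      rw [h1]
      have h2 : ‖F (t + c m) - F t‖ ≤ L * c m := by
        simpa [hc, abs_of_nonneg (by positivity : (0:ℝ) ≤ (m:ℝ)+1)] using this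
      calc ((m:ℝ)+1) * ‖F (t + c m) - F t‖ ≤ ((m:ℝ)+1) * ((L:ℝ) * c m) := by
            apply mul_le_mul_of_nonneg_left h2; positivity
        _ = (L:ℝ) := by simp only [hc]; field_simp
    · filter_upwards [ae_restrict_of_ae hdiff] with t ht
      exact slope_tendsto ht.hasDerivAt
  -- compute the integrals of g m
  have hgint : ∀ m, ∫ t in Ioc (0:ℝ) x, g m t
      = ((m:ℝ)+1) • (G (x + c m) - G x) - ((m:ℝ)+1) • G (c m) := by
    intro m
    have i1 : IntervalIntegrable (fun t => F (t + c m)) volume 0 x :=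
      (hFc.comp (continuous_id.add continuous_const)).intervalIntegrable _ _
    have i2 : IntervalIntegrable F volume 0 x := hFc.intervalIntegrable _ _
    rw [← intervalIntegral.integral_of_le hx]
    have e1 : ∫ t in (0:ℝ)..x, g m t
        = ((m:ℝ)+1) • ((∫ t in (0:ℝ)..x, F (t + c m)) - ∫ t in (0:ℝ)..x, F t) := by
      rw [← intervalIntegral.integral_sub i1 i2, ← intervalIntegral.integral_smul]
    rw [e1, intervalIntegral.integral_comp_add_right, zero_add]
    have e2 : (∫ t in (c m)..(x + c m), F t) - ∫ t in (0:ℝ)..x, F t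
        = (G (x + c m) - G x) - G (c m) := by
      have a1 : G (c m) + ∫ t in (c m)..(x + c m), F t = G (x + c m) :=
        intervalIntegral.integral_add_adjacent_intervals
          (hFc.intervalIntegrable _ _) (hFc.intervalIntegrable _ _)
      have a2 : (∫ t in (c m)..(x + c m), F t) = G (x + c m) - G (c m) := by
        rw [← a1]; abel
      rw [a2]
      show G (x + c m) - G (c m) - G x = G (x + c m) - G x - G (c m)
      abel
    rw [e2, smul_sub]
  -- limits of the right-hand side
  have hlim1 : Tendsto (fun m : ℕ => ((m:ℝ)+1) • (G (x + c m) - G x)) atTop (nhds (F x)) :=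
    slope_tendsto (hGderiv x)
  have hlim2 : Tendsto (fun m : ℕ => ((m:ℝ)+1) • G (c m)) atTop (nhds (F 0)) := by
    have := slope_tendsto (hGderiv 0)
    simp only [zero_add] at this
    have hG0 : G 0 = 0 := intervalIntegral.integral_same
    simpa [hG0] using this
  have hlim : Tendsto (fun m => ∫ t in Ioc (0:ℝ) x, g m t) atTop (nhds (F x - F 0)) := by
    simp only [hgint]
    exact hlim1.sub hlim2
  have : (∫ t in Ioc (0:ℝ) x, deriv F t) = F x - F 0 :=
    tendsto_nhds_unique hDCT hlim
  rw [intervalIntegral.integral_of_le hx, this]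
  abel

lemma intInt_of_bounded {f : ℝ → Euc n} (hm : Measurable f) {M : ℝ}
    (hb : ∀ t, ‖f t‖ ≤ M) (a b : ℝ) : IntervalIntegrable f volume a b := by
  have key : ∀ u v : ℝ, IntegrableOn f (Ioc u v) volume := by
    intro u v
    refine Integrable.mono' (integrableOn_const ?_)
      hm.aestronglyMeasurable.restrict (ae_of_all _ hb)
    rw [Real.volume_Ioc]
    exact ENNReal.ofReal_ne_top
  exact ⟨key a b, key b a⟩

/-- Euler polygon nodes. -/
def eulerP (sel : Euc n → Euc n) (x₀ : Euc n) (h : ℝ) : ℕ → Euc n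
  | 0 => x₀
  | (i+1) => eulerP sel x₀ h i + h • sel (eulerP sel x₀ h i)

/-- Euler "derivative" function. -/
def eulerV (sel : Euc n → Euc n) (x₀ : Euc n) (T h : ℝ) (t : ℝ) : Euc n :=
  if t ∈ Ico (0:ℝ) T then sel (eulerP sel x₀ h ⌊t / h⌋₊) else 0

/-- Euler polygon. -/
def eulerX (sel : Euc n → Euc n) (x₀ : Euc n) (T h : ℝ) (t : ℝ) : Euc n :=
  x₀ + ∫ s in (0:ℝ)..t, eulerV sel x₀ T h s

variable {sel : Euc n → Euc n} {x₀ : Euc n} {T h M : ℝ}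

lemma eulerV_meas (hh : 0 < h) : Measurable (eulerV sel x₀ T h) := by
  have h1 : Measurable fun t : ℝ => ⌊t / h⌋₊ := by
    apply Monotone.measurable
    intro s t hst
    exact Nat.floor_mono (by gcongr)
  have h2 : Measurable fun t : ℝ => sel (eulerP sel x₀ h ⌊t / h⌋₊) :=
    Measurable.comp (f := fun t : ℝ => ⌊t / h⌋₊)
      (g := fun i => sel (eulerP sel x₀ h i)) measurable_from_nat h1
  exact h2.ite measurableSet_Ico measurable_const

lemma eulerV_norm (hM : 0 ≤ M) (hsb : ∀ x, ‖sel x‖ ≤ M) (t : ℝ) :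
    ‖eulerV sel x₀ T h t‖ ≤ M := by
  unfold eulerV
  split
  · exact hsb _
  · simpa using hM

lemma eulerX_sub (hh : 0 < h) (hM : 0 ≤ M) (hsb : ∀ x, ‖sel x‖ ≤ M) (s t : ℝ) :
    eulerX sel x₀ T h t - eulerX sel x₀ T h s = ∫ u in s..t, eulerV sel x₀ T h u := by
  have hint : ∀ a b : ℝ, IntervalIntegrable (eulerV sel x₀ T h) volume a b :=
    intInt_of_bounded (eulerV_meas hh) (eulerV_norm hM hsb)
  have hadd := intervalIntegral.integral_add_adjacent_intervals (hint 0 s) (hint s t)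
  unfold eulerX
  rw [← hadd]
  abel

lemma eulerX_lip (hh : 0 < h) (hM : 0 ≤ M) (hsb : ∀ x, ‖sel x‖ ≤ M) (s t : ℝ) :
    ‖eulerX sel x₀ T h t - eulerX sel x₀ T h s‖ ≤ M * |t - s| := by
  rw [eulerX_sub hh hM hsb]
  exact intervalIntegral.norm_integral_le_of_norm_le_const (fun u _ => eulerV_norm hM hsb u)

lemma eulerX_node (hh : 0 < h) (hM : 0 ≤ M) (hsb : ∀ x, ‖sel x‖ ≤ M) :
    ∀ i : ℕ, (i:ℝ) * h ≤ T → eulerX sel x₀ T h ((i:ℝ) * h) = eulerP sel x₀ h i := by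
  intro i
  induction i with
  | zero => intro _; simp [eulerX, eulerP]
  | succ i ih =>
    intro hiT
    have hcast : ((i+1:ℕ):ℝ) = (i:ℝ) + 1 := by push_cast; ring
    have hi : (i:ℝ) * h ≤ T := by
      refine le_trans ?_ hiT
      rw [hcast]
      nlinarith [hh.le]
    have hae : ∀ᵐ u ∂(volume : Measure ℝ), u ≠ ((i:ℝ)+1)*h := by
      have h0 : (volume : Measure ℝ) {(((i:ℝ)+1)*h)} = 0 := measure_singleton _
      rw [ae_iff]
      convert h0 using 2
      ext u
      simp
    have hconst : ∀ᵐ u ∂(volume : Measure ℝ), u ∈ Set.uIoc ((i:ℝ)*h) (((i:ℝ)+1)*h) →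
        eulerV sel x₀ T h u = sel (eulerP sel x₀ h i) := by
      filter_upwards [hae] with u hu hmem
      have hle : (i:ℝ)*h ≤ ((i:ℝ)+1)*h := by nlinarith [hh.le]
      rw [Set.uIoc_of_le hle] at hmem
      have hu0 : (0:ℝ) ≤ u := le_trans (by positivity) hmem.1.le
      have huT : u < T := lt_of_lt_of_le (lt_of_le_of_ne hmem.2 hu) (hcast ▸ hiT)
      have hfl : ⌊u / h⌋₊ = i := by
        rw [Nat.floor_eq_iff (by positivity)]
        constructor
        · rw [le_div_iff₀ hh]; exact hmem.1.le
        · rw [div_lt_iff₀ hh]; push_cast; nlinarith [hmem.2, hu, lt_of_le_of_ne hmem.2 hu]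
      unfold eulerV
      rw [if_pos ⟨hu0, huT⟩, hfl]
    have hstep : eulerX sel x₀ T h (((i:ℝ)+1) * h) - eulerX sel x₀ T h ((i:ℝ)*h)
        = h • sel (eulerP sel x₀ h i) := by
      rw [eulerX_sub hh hM hsb, intervalIntegral.integral_congr_ae hconst,
        intervalIntegral.integral_const]
      congr 1
      ring
    have hgoal : eulerX sel x₀ T h (((i:ℝ)+1) * h)
        = eulerP sel x₀ h i + h • sel (eulerP sel x₀ h i) := by
      rw [← hstep, ih hi]
      abel
    rw [hcast, hgoal]
    rfl

lemma eulerV_mem (hh : 0 < h) (hM : 0 ≤ M) (hsb : ∀ x, ‖sel x‖ ≤ M)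
    {s : ℝ} (hs : s ∈ Ico (0:ℝ) T)
    (H : Euc n → Set (Euc n)) (hsel : ∀ x, sel x ∈ H x) :
    ∃ y : Euc n, eulerV sel x₀ T h s ∈ H y ∧ ‖y - eulerX sel x₀ T h s‖ ≤ M * h := by
  have h0s : (0:ℝ) ≤ s := hs.1
  have hsT : s < T := hs.2
  have hile : (⌊s/h⌋₊:ℝ) ≤ s / h := Nat.floor_le (by positivity)
  have hlt : s / h < (⌊s/h⌋₊:ℝ) + 1 := Nat.lt_floor_add_one _
  have hih : (⌊s/h⌋₊:ℝ) * h ≤ s := (le_div_iff₀ hh).1 hile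
  have hs_lt : s < ((⌊s/h⌋₊:ℝ)+1) * h := (div_lt_iff₀ hh).1 hlt
  have hiT : (⌊s/h⌋₊:ℝ) * h ≤ T := le_trans hih hsT.le
  refine ⟨eulerP sel x₀ h ⌊s/h⌋₊, ?_, ?_⟩
  · have hv : eulerV sel x₀ T h s = sel (eulerP sel x₀ h ⌊s/h⌋₊) := by
      unfold eulerV
      rw [if_pos hs]
    rw [hv]
    exact hsel _
  · rw [← eulerX_node hh hM hsb _ hiT]
    refine le_trans (eulerX_lip hh hM hsb s ((⌊s/h⌋₊:ℝ)*h)) ?_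
    have habs : |(⌊s/h⌋₊:ℝ)*h - s| ≤ h := by
      rw [abs_le]
      constructor <;> nlinarith
    nlinarith

lemma eulerX_def (sel : Euc n → Euc n) (x₀ : Euc n) (T h t : ℝ) :
    eulerX sel x₀ T h t = x₀ + ∫ s in (0:ℝ)..t, eulerV sel x₀ T h s := rfl

lemma arzela_extract {T M : ℝ} (hT : 0 < T) (hM : 0 < M) (x₀ : Euc n)
    (X : ℕ → ℝ → Euc n)
    (hlip : ∀ k s t, ‖X k t - X k s‖ ≤ M * |t - s|)
    (h0 : ∀ k, X k 0 = x₀) :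
    ∃ (z : ℝ → Euc n) (φ : ℕ → ℕ), StrictMono φ ∧
      (∀ s t : ℝ, ‖z t - z s‖ ≤ M * |t - s|) ∧ z 0 = x₀ ∧
      ∀ ε : ℝ, 0 < ε → ∀ᶠ j in atTop, ∀ t ∈ Icc (0:ℝ) T, ‖X (φ j) t - z t‖ ≤ ε := by
  haveI : CompactSpace (Icc (0:ℝ) T) := isCompact_iff_compactSpace.1 isCompact_Icc
  set α := ↥(Icc (0:ℝ) T)
  have h0mem : (0:ℝ) ∈ Icc (0:ℝ) T := ⟨le_refl _, hT.le⟩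
  -- the sequence as bounded continuous functions
  have hlipsub : ∀ k, LipschitzWith M.toNNReal (fun t : α => X k (t:ℝ)) := by
    intro k
    rw [lipschitzWith_iff_dist_le_mul]
    intro a b
    rw [Subtype.dist_eq, dist_eq_norm, dist_eq_norm]
    simpa [Real.coe_toNNReal _ hM.le] using hlip k b a
  set F : ℕ → (α →ᵇ Euc n) := fun k =>
    BoundedContinuousFunction.mkOfCompact ⟨fun t : α => X k (t:ℝ), (hlipsub k).continuous⟩
    with hF
  set A : Set (α →ᵇ Euc n) :=
    {f | (∀ a b : α, dist (f a) (f b) ≤ M * dist a b) ∧ f ⟨0, h0mem⟩ = x₀} with hA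
  have hFA : ∀ k, F k ∈ A := by
    intro k
    constructor
    · intro a b
      rw [dist_eq_norm]
      calc ‖X k a - X k b‖ ≤ M * |(b:ℝ) - a| := by
            simpa [abs_sub_comm] using hlip k (b:ℝ) (a:ℝ)
        _ = M * dist a b := by rw [Subtype.dist_eq, dist_eq_norm, Real.norm_eq_abs, abs_sub_comm]
      -- note dist a b = |a - b|
    · exact h0 k
  have in_s : ∀ (f : α →ᵇ Euc n) (x : α), f ∈ A → f x ∈ closedBall x₀ (M * T) := by
    intro f x hf
    rw [mem_closedBall]
    calc dist (f x) x₀ = dist (f x) (f ⟨0, h0mem⟩) := by rw [hf.2]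
      _ ≤ M * dist x (⟨0, h0mem⟩ : α) := hf.1 _ _
      _ ≤ M * T := by
          refine mul_le_mul_of_nonneg_left ?_ hM.le
          rw [Subtype.dist_eq, Real.dist_eq]
          have hx1 : (x:ℝ) ∈ Icc (0:ℝ) T := x.2
          rw [abs_of_nonneg (by simpa using hx1.1)]
          simpa using hx1.2
  have equi : Equicontinuous ((↑) : A → α → Euc n) := by
    intro x
    rw [Metric.equicontinuousAt_iff]
    intro ε hε
    have key : ∀ (f : α →ᵇ Euc n), f ∈ A → ∀ y : α, dist y x < ε/(M+1) →
        dist (f y) (f x) < ε := by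
      intro f hf y hy
      have h1 := hf.1 y x
      have h2 : M * dist y x ≤ M * (ε/(M+1)) := mul_le_mul_of_nonneg_left hy.le hM.le
      have h3 : M * (ε/(M+1)) < ε := by
        rw [mul_div_assoc', div_lt_iff₀ (by linarith)]
        nlinarith
      linarith
    exact ⟨ε/(M+1), by positivity, fun y hy f => by
      have := key f.1 f.2 y hy
      rwa [dist_comm] at this⟩
  have hcomp : IsCompact (closure A) :=
    BoundedContinuousFunction.arzela_ascoli (closedBall x₀ (M * T))
      (isCompact_closedBall _ _) A in_s equi
  obtain ⟨g, hg, φ, hφ, hgconv⟩ :=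
    hcomp.tendsto_subseq (fun k => subset_closure (hFA k))
  -- the limit function
  set z : ℝ → Euc n := fun t => g (projIcc 0 T hT.le t) with hz
  have hgA : ∀ (a b : α), dist (g a) (g b) ≤ M * dist a b := by
    intro a b
    refine le_of_forall_pos_le_add fun ε hε => ?_
    obtain ⟨f, hfA, hfg⟩ := Metric.mem_closure_iff.1 hg (ε/2) (by positivity)
    calc dist (g a) (g b) ≤ dist (g a) (f a) + dist (f a) (f b) + dist (f b) (g b) :=
          dist_triangle4 _ _ _ _
      _ ≤ ε/2 + M * dist a b + ε/2 := by
          gcongr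
          · rw [dist_comm]
            exact le_trans (BoundedContinuousFunction.dist_coe_le_dist a) (dist_comm g f ▸ hfg.le)
          · exact hfA.1 a b
          · rw [dist_comm (f b)]
            exact le_trans (BoundedContinuousFunction.dist_coe_le_dist b) (dist_comm g f ▸ hfg.le)
      _ = M * dist a b + ε := by ring
  have hg0 : g ⟨0, h0mem⟩ = x₀ := by
    have : dist (g ⟨0, h0mem⟩) x₀ = 0 := by
      refine le_antisymm (le_of_forall_pos_le_add fun ε hε => ?_) dist_nonneg
      obtain ⟨f, hfA, hfg⟩ := Metric.mem_closure_iff.1 hg ε hε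
      calc dist (g ⟨0, h0mem⟩) x₀ ≤ dist (g ⟨0, h0mem⟩) (f ⟨0, h0mem⟩) + dist (f ⟨0, h0mem⟩) x₀ :=
            dist_triangle _ _ _
        _ ≤ ε + 0 := by
            gcongr
            · rw [dist_comm]
              exact le_trans (BoundedContinuousFunction.dist_coe_le_dist _) (dist_comm g f ▸ hfg.le)
            · rw [hfA.2]; simp
        _ = 0 + ε := by ring
    simpa [dist_eq_zero] using this
  refine ⟨z, φ, hφ, ?_, ?_, ?_⟩
  · intro s t
    have h1 : dist (z t) (z s) ≤ M * dist (projIcc 0 T hT.le t) (projIcc 0 T hT.le s) :=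
      hgA _ _
    have h2 : dist (projIcc 0 T hT.le t) (projIcc 0 T hT.le s) ≤ dist t s := by
      simpa using (LipschitzWith.projIcc hT.le).dist_le_mul t s
    rw [← dist_eq_norm]
    calc dist (z t) (z s) ≤ M * dist t s := le_trans h1 (by gcongr)
      _ = M * |t - s| := by rw [Real.dist_eq]
  · rw [hz]
    simp only [projIcc_left]
    exact hg0
  · intro ε hε
    have hd : Tendsto (fun j => dist (F (φ j)) g) atTop (nhds 0) :=
      tendsto_iff_dist_tendsto_zero.1 hgconv
    filter_upwards [hd.eventually_le_const (by linarith : (0:ℝ) < ε) |>.mono fun j hj => hj]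
      with j hj t ht
    have hzt : z t = g ⟨t, ht⟩ := by
      show g (projIcc 0 T hT.le t) = g ⟨t, ht⟩
      rw [projIcc_of_mem hT.le ht]
    have hXt : X (φ j) t = F (φ j) ⟨t, ht⟩ := rfl
    rw [hzt, hXt, ← dist_eq_norm]
    exact le_trans (BoundedContinuousFunction.dist_coe_le_dist _) hj

/-- Global existence for a bounded well-posed map. -/
theorem exists_sol_bounded (H : Euc n → Set (Euc n))
    (hosc : IsClosed {p : Euc n × Euc n | p.2 ∈ H p.1})
    (hne : ∀ x : Euc n, (H x).Nonempty) (hconv : ∀ x : Euc n, Convex ℝ (H x))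
    {M : ℝ} (hM : 0 < M) (hb : ∀ x : Euc n, ∀ v ∈ H x, ‖v‖ ≤ M)
    {T : ℝ} (hT : 0 < T) (x₀ : Euc n) :
    ∃ z : ℝ → Euc n, z 0 = x₀ ∧ Continuous z ∧
      (∀ᵐ t ∂(volume.restrict (Icc (0:ℝ) T)), deriv z t ∈ H (z t)) ∧
      (∀ t : ℝ, ‖deriv z t‖ ≤ M) ∧
      (∀ t ∈ Icc (0:ℝ) T, z t = x₀ + ∫ s in (0:ℝ)..t, deriv z s) := by
  classical
  -- a selection of H
  set sel : Euc n → Euc n := fun x => (hne x).some with hseldef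
  have hsel : ∀ x, sel x ∈ H x := fun x => (hne x).some_mem
  have hselb : ∀ x, ‖sel x‖ ≤ M := fun x => hb x _ (hsel x)
  -- Euler approximations with step T/(k+1)
  set st : ℕ → ℝ := fun k => T / ((k:ℝ) + 1) with hst
  have hstpos : ∀ k, 0 < st k := fun k => by positivity
  set X : ℕ → ℝ → Euc n := fun k => eulerX sel x₀ T (st k) with hX
  set V : ℕ → ℝ → Euc n := fun k => eulerV sel x₀ T (st k) with hV
  have hlip : ∀ k s t, ‖X k t - X k s‖ ≤ M * |t - s| := fun k s t =>
    eulerX_lip (hstpos k) hM.le hselb s t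
  have h0 : ∀ k, X k 0 = x₀ := by
    intro k
    show eulerX sel x₀ T (st k) 0 = x₀
    rw [eulerX_def, intervalIntegral.integral_same, add_zero]
  obtain ⟨z, φ, hφ, hzlip, hz0, hunif⟩ := arzela_extract hT hM x₀ X hlip h0
  have hzLip : LipschitzWith M.toNNReal z := by
    rw [lipschitzWith_iff_dist_le_mul]
    intro a b
    rw [dist_eq_norm, dist_eq_norm, Real.norm_eq_abs, Real.coe_toNNReal _ hM.le]
    exact hzlip b a
  -- pointwise convergence
  have hpt : ∀ s ∈ Icc (0:ℝ) T, Tendsto (fun j => X (φ j) s) atTop (nhds (z s)) := by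
    intro s hs
    rw [Metric.tendsto_atTop]
    intro ε hε
    obtain ⟨N, hN⟩ := eventually_atTop.1 (hunif (ε/2) (by positivity))
    exact ⟨N, fun j hj => by
      rw [dist_eq_norm]
      exact lt_of_le_of_lt (hN j hj s hs) (by linarith)⟩
  -- the key inclusion at points of differentiability
  have key : ∀ t ∈ Ico (0:ℝ) T, DifferentiableAt ℝ z t → deriv z t ∈ H (z t) := by
    intro t ht hdt
    by_contra hw
    obtain ⟨ℓ, c, δ, hδ, hcw, hsep⟩ := osc_halfspace H hosc hb (z t) (deriv z t) (hconv _) hw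
    have claim : ∀ h : ℝ, 0 < h → t + h ≤ T → M * h ≤ δ/3 → ℓ (z (t+h) - z t) ≤ c * h := by
      intro h hh hhT hhδ
      have htIcc : t ∈ Icc (0:ℝ) T := ⟨ht.1, ht.2.le⟩
      have hthIcc : t + h ∈ Icc (0:ℝ) T := ⟨by linarith [ht.1], hhT⟩
      have hXlim : Tendsto (fun j => ℓ (X (φ j) (t+h) - X (φ j) t)) atTop
          (nhds (ℓ (z (t+h) - z t))) :=
        (ℓ.continuous.tendsto _).comp ((hpt (t+h) hthIcc).sub (hpt t htIcc))
      refine le_of_tendsto hXlim ?_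
      -- step sizes go to 0
      have hstep0 : Tendsto (fun j => M * st (φ j)) atTop (nhds 0) := by
        have h1 : Tendsto (fun j : ℕ => ((φ j : ℝ) + 1)) atTop atTop :=
          tendsto_atTop_add_const_right _ _ (tendsto_natCast_atTop_atTop.comp hφ.tendsto_atTop)
        have h2 : Tendsto (fun j => st (φ j)) atTop (nhds 0) :=
          Tendsto.div_atTop tendsto_const_nhds h1
        simpa using h2.const_mul M
      have hstepev : ∀ᶠ j in atTop, M * st (φ j) ≤ δ/3 :=
        hstep0.eventually_le_const (by positivity)
      filter_upwards [hunif (δ/3) (by positivity), hstepev] with j hj1 hj2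
      -- rewrite via the integral
      have hXint : X (φ j) (t+h) - X (φ j) t = ∫ u in t..(t+h), V (φ j) u :=
        eulerX_sub (hstpos (φ j)) hM.le hselb t (t+h)
      have hVint : IntegrableOn (V (φ j)) (Ioc t (t+h)) volume :=
        (intInt_of_bounded (eulerV_meas (hstpos (φ j))) (eulerV_norm hM.le hselb) t (t+h)).1
      have hcomm : ℓ (∫ u in Ioc t (t+h), V (φ j) u) = ∫ u in Ioc t (t+h), ℓ (V (φ j) u) :=
        (ContinuousLinearMap.integral_comp_comm ℓ hVint).symm
      -- a.e. bound on the integrand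
      have haeb : ∀ᵐ u ∂(volume.restrict (Ioc t (t+h))), ℓ (V (φ j) u) ≤ c := by
        have hne' : ∀ᵐ u ∂(volume.restrict (Ioc t (t+h))), u ≠ T := by
          apply ae_restrict_of_ae
          have hset : {u : ℝ | ¬ u ≠ T} = {T} := by ext u; simp
          rw [ae_iff, hset]
          exact measure_singleton T
        have hmem : ∀ᵐ u ∂(volume.restrict (Ioc t (t+h))), u ∈ Ioc t (t+h) :=
          ae_restrict_mem measurableSet_Ioc
        filter_upwards [hne', hmem] with u huT hu
        have hu0 : u ∈ Ico (0:ℝ) T :=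
          ⟨le_trans ht.1 hu.1.le, lt_of_le_of_ne (le_trans hu.2 hhT) huT⟩
        obtain ⟨y, hyH, hyX⟩ := eulerV_mem (hstpos (φ j)) hM.le hselb hu0 H hsel
        refine hsep y ?_ _ hyH
        have huIcc : u ∈ Icc (0:ℝ) T := ⟨hu0.1, hu0.2.le⟩
        have e1 : ‖X (φ j) u - z u‖ ≤ δ/3 := hj1 u huIcc
        have e2 : ‖z u - z t‖ ≤ M * |u - t| := hzlip t u
        have e3 : |u - t| ≤ h := by
          rw [abs_le]
          constructor <;> [linarith [hu.1.le]; linarith [hu.2]]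
        have e4 : M * |u - t| ≤ δ/3 := by
          calc M * |u - t| ≤ M * h := by gcongr
            _ ≤ δ/3 := hhδ
        calc dist y (z t) ≤ ‖y - X (φ j) u‖ + ‖X (φ j) u - z u‖ + ‖z u - z t‖ := by
              rw [dist_eq_norm]
              have : y - z t = (y - X (φ j) u) + (X (φ j) u - z u) + (z u - z t) := by abel
              rw [this]
              exact le_trans (norm_add_le _ _) (by gcongr; exact norm_add_le _ _)
          _ ≤ M * st (φ j) + δ/3 + (M * |u - t|) := by gcongr
          _ ≤ δ/3 + δ/3 + δ/3 := by gcongr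
          _ = δ := by ring
      -- integrate the bound
      have hint1 : Integrable (fun u => ℓ (V (φ j) u)) (volume.restrict (Ioc t (t+h))) :=
        ContinuousLinearMap.integrable_comp ℓ hVint
      have hint2 : Integrable (fun _ : ℝ => c) (volume.restrict (Ioc t (t+h))) := by
        refine integrableOn_const ?_
        rw [Real.volume_Ioc]
        exact ENNReal.ofReal_ne_top
      have hmono := integral_mono_ae hint1 hint2 haeb
      have hcint : ∫ _ in Ioc t (t+h), c = c * h := by
        rw [setIntegral_const, measureReal_def, Real.volume_Ioc, smul_eq_mul,
          ENNReal.toReal_ofReal (by linarith : (0:ℝ) ≤ t + h - t)]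
        ring
      rw [hXint, intervalIntegral.integral_of_le (by linarith : t ≤ t + h), hcomm]
      rw [hcint] at hmono
      exact hmono
    -- pass to the limit along difference quotients
    have hlim := slope_tendsto hdt.hasDerivAt
    have hc : ℓ (deriv z t) ≤ c := by
      refine le_of_tendsto ((ℓ.continuous.tendsto _).comp hlim) ?_
      have hTt : 0 < T - t := by linarith [ht.2]
      have hsmall : Tendsto (fun m : ℕ => ((m:ℝ)+1)⁻¹) atTop (nhds 0) := by
        have h1 : Tendsto (fun m : ℕ => ((m : ℝ) + 1)) atTop atTop :=
          tendsto_atTop_add_const_right _ _ tendsto_natCast_atTop_atTop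
        exact h1.inv_tendsto_atTop
      have hev1 : ∀ᶠ m : ℕ in atTop, ((m:ℝ)+1)⁻¹ ≤ T - t :=
        hsmall.eventually_le_const hTt
      have hsmall0 : Tendsto (fun m : ℕ => M * ((m:ℝ)+1)⁻¹) atTop (nhds 0) := by
        simpa using hsmall.const_mul M
      have hev2 : ∀ᶠ m : ℕ in atTop, M * ((m:ℝ)+1)⁻¹ ≤ δ/3 :=
        hsmall0.eventually_le_const (by positivity : (0:ℝ) < δ/3)
      filter_upwards [hev1, hev2] with m hm1 hm2
      have hhpos : (0:ℝ) < ((m:ℝ)+1)⁻¹ := by positivity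
      have := claim ((m:ℝ)+1)⁻¹ hhpos (by linarith) hm2
      have heq : ℓ (((m:ℝ)+1) • (z (t + ((m:ℝ)+1)⁻¹) - z t))
          = ((m:ℝ)+1) * ℓ (z (t + ((m:ℝ)+1)⁻¹) - z t) := by
        rw [ℓ.map_smul, smul_eq_mul]
      show ℓ (((m:ℝ)+1) • (z (t + ((m:ℝ)+1)⁻¹) - z t)) ≤ c
      rw [heq]
      calc ((m:ℝ)+1) * ℓ (z (t + ((m:ℝ)+1)⁻¹) - z t) ≤ ((m:ℝ)+1) * (c * ((m:ℝ)+1)⁻¹) := by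
            apply mul_le_mul_of_nonneg_left this (by positivity)
        _ = c := by field_simp
    linarith
  -- derivative bound
  have hderivb : ∀ t : ℝ, ‖deriv z t‖ ≤ M := by
    intro t
    by_cases hdt : DifferentiableAt ℝ z t
    · have hlim := slope_tendsto hdt.hasDerivAt
      refine le_of_tendsto (hlim.norm) (Eventually.of_forall fun m => ?_)
      have hp : (0:ℝ) < ((m:ℝ)+1)⁻¹ := by positivity
      rw [norm_smul, Real.norm_eq_abs, abs_of_nonneg (by positivity : (0:ℝ) ≤ (m:ℝ)+1)]
      calc ((m:ℝ)+1) * ‖z (t + ((m:ℝ)+1)⁻¹) - z t‖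
          ≤ ((m:ℝ)+1) * (M * |t + ((m:ℝ)+1)⁻¹ - t|) := by
            exact mul_le_mul_of_nonneg_left (hzlip t _) (by positivity)
        _ = M := by
            rw [add_sub_cancel_left, abs_of_pos hp]
            field_simp
    · rw [deriv_zero_of_not_differentiableAt hdt]
      simpa using hM.le
  -- the a.e. inclusion
  have hae : ∀ᵐ t ∂(volume.restrict (Icc (0:ℝ) T)), deriv z t ∈ H (z t) := by
    have h1 : ∀ᵐ t ∂(volume.restrict (Icc (0:ℝ) T)), DifferentiableAt ℝ z t :=
      ae_restrict_of_ae hzLip.ae_differentiableAt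
    have h2 : ∀ᵐ t ∂(volume.restrict (Icc (0:ℝ) T)), t ∈ Icc (0:ℝ) T :=
      ae_restrict_mem measurableSet_Icc
    have h3 : ∀ᵐ t ∂(volume.restrict (Icc (0:ℝ) T)), t ≠ T := by
      apply ae_restrict_of_ae
      have hset : {u : ℝ | ¬ u ≠ T} = {T} := by ext u; simp
      rw [ae_iff, hset]
      exact measure_singleton T
    filter_upwards [h1, h2, h3] with t ht1 ht2 ht3
    exact key t ⟨ht2.1, lt_of_le_of_ne ht2.2 ht3⟩ ht1
  refine ⟨z, hz0, hzLip.continuous, hae, hderivb, ?_⟩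
  intro t ht
  rw [← hz0]
  exact lipschitz_ftc hzLip ht.1

end AuxProofs

/-- cf. Cor. 2.4: a well-posed inclusion on `ℝⁿ` admits a
`(T, ε)`-truncated solution for every `T, ε > 0` and every initial condition. -/
theorem stmt5 {n : ℕ} (H : Euc n → Set (Euc n))
    (hosc : IsClosed {p : Euc n × Euc n | p.2 ∈ H p.1})
    (hlb : ∀ x : Euc n, ∃ U ∈ nhds x, Bornology.IsBounded (⋃ y ∈ U, H y))
    (hne : ∀ x : Euc n, (H x).Nonempty) (hconv : ∀ x : Euc n, Convex ℝ (H x)) :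
    ∀ T : ℝ, 0 < T → ∀ ε : ℝ, 0 < ε → ∀ x₀ : Euc n,
      ∃ (T' : ℝ) (z : ℝ → Euc n), IsTruncSol H Set.univ T ε x₀ T' z := by
  intro T hT ε hε x₀
  obtain ⟨M₀, hM₀⟩ := bound_on_compact H hlb (isCompact_closedBall x₀ ε)
  set M := max M₀ 1 with hMdef
  have hM1 : (0:ℝ) < M := lt_of_lt_of_le one_pos (le_max_right _ _)
  set H' : Euc n → Set (Euc n) := fun x => H (ret x₀ ε x) with hH'
  have hosc' : IsClosed {p : Euc n × Euc n | p.2 ∈ H' p.1} := by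
    have heq : {p : Euc n × Euc n | p.2 ∈ H' p.1}
        = (fun p : Euc n × Euc n => (ret x₀ ε p.1, p.2)) ⁻¹'
          {p : Euc n × Euc n | p.2 ∈ H p.1} := rfl
    rw [heq]
    exact hosc.preimage (((ret_continuous x₀ hε).comp continuous_fst).prodMk continuous_snd)
  have hne' : ∀ x, (H' x).Nonempty := fun x => hne _
  have hconv' : ∀ x, Convex ℝ (H' x) := fun x => hconv _
  have hb' : ∀ x : Euc n, ∀ v ∈ H' x, ‖v‖ ≤ M := fun x v hv =>
    le_trans (hM₀ _ (ret_mem x₀ hε x) v hv) (le_max_left _ _)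
  obtain ⟨z, hz0, hzc, hzae, hzdb, hzint⟩ :=
    exists_sol_bounded H' hosc' hne' hconv' hM1 hb' hT x₀
  -- common constructor for the truncated solution
  have mk : ∀ T' : ℝ, 0 ≤ T' → T' ≤ T → (∀ t ∈ Icc (0:ℝ) T', ‖z t - x₀‖ ≤ ε) →
      (T' = T ∨ ‖z T' - x₀‖ = ε) → IsTruncSol H Set.univ T ε x₀ T' z := by
    intro T' h0' hT' hball hdisj
    refine ⟨h0', hT', ⟨deriv z, ?_, ?_, ?_, ?_⟩, hz0, hball, hdisj⟩
    · intro t _; trivial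
    · refine Integrable.mono' (integrableOn_const ?_)
        ((measurable_deriv z).aestronglyMeasurable.restrict)
        (ae_of_all _ hzdb)
      rw [Real.volume_Icc]
      exact ENNReal.ofReal_ne_top
    · have hsub : Icc (0:ℝ) T' ⊆ Icc (0:ℝ) T := Icc_subset_Icc le_rfl hT'
      have h1 : ∀ᵐ t ∂(volume.restrict (Icc (0:ℝ) T')), deriv z t ∈ H' (z t) :=
        ae_restrict_of_ae_restrict_of_subset hsub hzae
      have h2 : ∀ᵐ t ∂(volume.restrict (Icc (0:ℝ) T')), t ∈ Icc (0:ℝ) T' :=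
        ae_restrict_mem measurableSet_Icc
      filter_upwards [h1, h2] with t ht1 ht2
      have hzb : z t ∈ closedBall x₀ ε := by
        rw [mem_closedBall, dist_eq_norm]
        exact hball t ht2
      have : H' (z t) = H (z t) := by
        show H (ret x₀ ε (z t)) = H (z t)
        rw [ret_eq x₀ hε hzb]
      rwa [this] at ht1
    · intro t ht
      rw [hz0]
      exact hzint t (Icc_subset_Icc le_rfl hT' ht)
  -- hitting-time dichotomy
  set S : Set ℝ := {t | t ∈ Icc (0:ℝ) T ∧ ε ≤ ‖z t - x₀‖} with hSdef
  by_cases hSne : S.Nonempty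
  · -- the solution reaches the sphere
    have hSclosed : IsClosed S := by
      apply IsClosed.inter isClosed_Icc
      exact isClosed_le continuous_const ((hzc.sub continuous_const).norm)
    have hbdd : BddBelow S := ⟨0, fun t ht => ht.1.1⟩
    set τ := sInf S with hτdef
    have hτS : τ ∈ S := hSclosed.csInf_mem hSne hbdd
    have hτ0 : 0 ≤ τ := hτS.1.1
    have hτT : τ ≤ T := hτS.1.2
    have hτpos : 0 < τ := by
      rcases lt_or_eq_of_le hτ0 with h | h
      · exact h
      · exfalso
        have : ε ≤ ‖z τ - x₀‖ := hτS.2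
        rw [← h] at this
        rw [hz0] at this
        simp at this
        linarith
    have hlt : ∀ t, 0 ≤ t → t < τ → ‖z t - x₀‖ < ε := by
      intro t ht0 htτ
      by_contra hcon
      push_neg at hcon
      have : t ∈ S := ⟨⟨ht0, le_trans htτ.le hτT⟩, hcon⟩
      exact absurd (csInf_le hbdd this) (not_le.2 htτ)
    have hτeq : ‖z τ - x₀‖ = ε := by
      refine le_antisymm ?_ hτS.2
      have htt : Tendsto (fun t => ‖z t - x₀‖) (nhdsWithin τ (Iio τ)) (nhds ‖z τ - x₀‖) :=
        ((hzc.sub continuous_const).norm.continuousAt.tendsto).mono_left nhdsWithin_le_nhds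
      refine le_of_tendsto htt ?_
      filter_upwards [Ioo_mem_nhdsLT_of_mem (⟨hτpos, le_refl τ⟩ : τ ∈ Ioc (0:ℝ) τ)]
        with t ht
      exact (hlt t ht.1.le ht.2).le
    refine ⟨τ, z, mk τ hτ0 hτT ?_ (Or.inr hτeq)⟩
    intro t ht
    rcases lt_or_eq_of_le ht.2 with h | h
    · exact (hlt t ht.1 h).le
    · rw [h, hτeq]
  · -- the solution stays in the ball on all of [0, T]
    refine ⟨T, z, mk T hT.le le_rfl ?_ (Or.inl rfl)⟩
    intro t ht
    by_contra hcon
    push_neg at hcon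
    exact hSne ⟨t, ht, hcon.le⟩
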